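/- arXiv:2011.09997 — 5 statements merged into one kernel-verified Lean document; each statement's English description precedes it below -/
import Mathlib

section
/- Let λ be a partition of n = d + k and let T be a standard Young tableau of shape λ. If the first row of T does not begin with the entries 1, 2, ..., k (in order), then the charge of T is strictly greater than d. Here the charge of T is the sum of the entries of the index sequence i(w(T)) of the reading word of T. -/
/-- The reading word of a tableau (given as its list of rows): read each column from
bottom to top, columns from left to right. -/
def readingWord (rows : List (List ℕ)) : List ℕ :=
  (List.range ((rows.map List.length).foldr max 0)).flatMap
    (fun j => (rows.filterMap (fun r => r[j]?)).reverse)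

/-- The index value of the entry `j` in a word `w` (a permutation of `1, …, n`):
`1` gets index `0`; `j+1` gets the index of `j` if it lies to the right of `j`
in `w`, and one more otherwise. -/
def idxVal (w : List ℕ) : ℕ → ℕ
  | 0 => 0
  | 1 => 0
  | j + 2 =>
      idxVal w (j + 1) + (if w.idxOf (j + 1) < w.idxOf (j + 2) then 0 else 1)

/-- The charge of a word `w` containing the entries `1, …, n`: the sum of the entries
of the index sequence. -/
def charge (w : List ℕ) (n : ℕ) : ℕ :=
  ∑ j ∈ Finset.range (n + 1), idxVal w j

/-- `rows` is a standard Young tableau of shape `lam`, a partition of `n`: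
the row lengths are given by `lam`, which is non-increasing with positive parts summing
to `n`; the entries are exactly `1, …, n`; rows increase from left to right and
columns increase from top to bottom. -/
def IsSYT (rows : List (List ℕ)) (lam : List ℕ) (n : ℕ) : Prop :=
  rows.map List.length = lam ∧
  List.Chain' (fun a b => b ≤ a) lam ∧
  (∀ a ∈ lam, 0 < a) ∧
  lam.sum = n ∧
  rows.flatten.Perm (List.range' 1 n) ∧
  (∀ r ∈ rows, List.Chain' (· < ·) r) ∧
  (∀ i j a b, (rows[(i : ℕ)]?).bind (fun r => r[(j : ℕ)]?) = some a →
    (rows[i + 1]?).bind (fun r => r[j]?) = some b → a < b)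

/-- Auxiliary lemmas -/
lemma aux_idxOf_lt {A B : List ℕ} {x y : ℕ} (hy : y ∈ A) (hx : x ∉ A) :
    (A ++ x :: B).idxOf y < (A ++ x :: B).idxOf x := by
  induction A with
  | nil => exact absurd hy (List.not_mem_nil)
  | cons a A ih =>
    have hax : a ≠ x := fun h => hx (h ▸ (List.mem_cons_self : a ∈ a :: A))
    simp only [List.cons_append, List.idxOf_cons]
    rcases eq_or_ne a y with rfl | hay
    · have : (a == x) = false := by simp [hax]
      simp [this]
    · have hy' : y ∈ A := by
        rcases List.mem_cons.mp hy with h | h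
        · exact absurd h.symm hay
        · exact h
      have hx' : x ∉ A := fun h => hx (List.mem_cons_of_mem _ h)
      have h1 : (a == y) = false := by simp [hay]
      have h2 : (a == x) = false := by simp [hax]
      simp only [h1, h2, cond_false]
      exact Nat.succ_lt_succ (ih hy' hx')

lemma aux_idx_ge {w : List ℕ} {t : ℕ} (ht : 2 ≤ t)
    (h : ¬ w.idxOf (t - 1) < w.idxOf t) :
    ∀ m, t ≤ m → 1 ≤ idxVal w m := by
  intro m hm
  induction m with
  | zero => omega
  | succ m ih =>
    obtain ⟨m', rfl⟩ : ∃ m', m = m' + 1 := ⟨m - 1, by omega⟩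
    show 1 ≤ idxVal w (m' + 2)
    rw [idxVal]
    rcases eq_or_lt_of_le hm with heq | hlt
    · have h1 : t - 1 = m' + 1 := by omega
      have h2 : t = m' + 2 := by omega
      rw [h1, h2] at h
      simp [h]
    · have := ih (by omega)
      omega

lemma aux_charge {w : List ℕ} {n t : ℕ} (ht : 2 ≤ t) (htn : t ≤ n)
    (h : ¬ w.idxOf (t - 1) < w.idxOf t) :
    n + 1 - t ≤ charge w n := by
  have hsub : Finset.Ico t (n + 1) ⊆ Finset.range (n + 1) := by
    intro j hj
    rw [Finset.mem_range]
    exact (Finset.mem_Ico.mp hj).2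
  calc n + 1 - t = (Finset.Ico t (n + 1)).card := (Nat.card_Ico t (n + 1)).symm
    _ = ∑ _j ∈ Finset.Ico t (n + 1), 1 := by simp
    _ ≤ ∑ j ∈ Finset.Ico t (n + 1), idxVal w j :=
        Finset.sum_le_sum (fun j hj => aux_idx_ge ht h j (Finset.mem_Ico.mp hj).1)
    _ ≤ ∑ j ∈ Finset.range (n + 1), idxVal w j :=
        Finset.sum_le_sum_of_subset hsub
    _ = charge w n := rfl


lemma aux_lenMono {rows : List (List ℕ)}
    (hch : List.Chain' (fun a b => b ≤ a) (rows.map List.length))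
    {i1 i2 : ℕ} {r1 r2 : List ℕ} (h12 : i1 ≤ i2)
    (h1 : rows[i1]? = some r1) (h2 : rows[i2]? = some r2) :
    r2.length ≤ r1.length := by
  haveI : IsTrans ℕ (fun a b => b ≤ a) := ⟨fun a b c hab hbc => le_trans hbc hab⟩
  have hpw : List.Pairwise (fun a b => b ≤ a) (rows.map List.length) :=
    List.isChain_iff_pairwise.mp hch
  rw [List.pairwise_map] at hpw
  rcases eq_or_lt_of_le h12 with rfl | hlt
  · rw [h1] at h2; exact le_of_eq (congrArg List.length (Option.some.inj h2)).symm
  · obtain ⟨hl1, hg1⟩ := List.getElem?_eq_some_iff.mp h1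
    obtain ⟨hl2, hg2⟩ := List.getElem?_eq_some_iff.mp h2
    have := List.pairwise_iff_getElem.mp hpw i1 i2 hl1 hl2 hlt
    rw [hg1, hg2] at this
    exact this

lemma aux_rowStrict {r : List ℕ} (hch : List.Chain' (· < ·) r)
    {j1 j2 a b : ℕ} (h12 : j1 < j2)
    (h1 : r[j1]? = some a) (h2 : r[j2]? = some b) : a < b := by
  have hpw : List.Pairwise (· < ·) r := List.isChain_iff_pairwise.mp hch
  obtain ⟨hl1, hg1⟩ := List.getElem?_eq_some_iff.mp h1
  obtain ⟨hl2, hg2⟩ := List.getElem?_eq_some_iff.mp h2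
  have := List.pairwise_iff_getElem.mp hpw j1 j2 hl1 hl2 h12
  rw [hg1, hg2] at this
  exact this

lemma aux_colStrict {rows : List (List ℕ)}
    (hch : List.Chain' (fun a b => b ≤ a) (rows.map List.length))
    (hcol : ∀ i j a b, (rows[(i : ℕ)]?).bind (fun r => r[(j : ℕ)]?) = some a →
      (rows[i + 1]?).bind (fun r => r[j]?) = some b → a < b)
    {c : ℕ} : ∀ {i2 : ℕ} {i1 : ℕ} {r1 r2 : List ℕ} {a b : ℕ}, i1 < i2 →
      rows[i1]? = some r1 → r1[c]? = some a →
      rows[i2]? = some r2 → r2[c]? = some b → a < b := by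
  intro i2
  induction i2 with
  | zero => intro i1 _ _ _ _ h; omega
  | succ m ih =>
    intro i1 r1 r2 a b hlt h1 h1c h2 h2c
    rcases eq_or_lt_of_le (Nat.lt_succ_iff.mp hlt) with rfl | hlt'
    · exact hcol i1 c a b (by rw [h1]; simpa using h1c) (by rw [h2]; simpa using h2c)
    · -- intermediate row m
      have hml : m < rows.length := by
        have := (List.getElem?_eq_some_iff.mp h2).1; omega
      obtain ⟨r', hr'⟩ : ∃ r', rows[m]? = some r' :=
        ⟨rows[m], List.getElem?_eq_some_iff.mpr ⟨hml, rfl⟩⟩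
      have hcl : c < r'.length := by
        have h1 : c < r2.length := (List.getElem?_eq_some_iff.mp h2c).1
        have h2' : r2.length ≤ r'.length := aux_lenMono hch (Nat.le_succ m) hr' h2
        omega
      obtain ⟨a', ha'⟩ : ∃ a', r'[c]? = some a' :=
        ⟨r'[c], List.getElem?_eq_some_iff.mpr ⟨hcl, rfl⟩⟩
      have s1 : a < a' := ih hlt' h1 h1c hr' ha'
      have s2 : a' < b := hcol m c a' b (by rw [hr']; simpa using ha') (by rw [h2]; simpa using h2c)
      omega

lemma aux_cellUniq {rows : List (List ℕ)} (hnd : rows.flatten.Nodup)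
    {i1 i2 j1 j2 v : ℕ} {r1 r2 : List ℕ}
    (h1 : rows[i1]? = some r1) (h1c : r1[j1]? = some v)
    (h2 : rows[i2]? = some r2) (h2c : r2[j2]? = some v) :
    i1 = i2 ∧ j1 = j2 := by
  obtain ⟨hrownd, hdisj⟩ := List.nodup_flatten.mp hnd
  have hv1 : v ∈ r1 := List.mem_of_getElem? h1c
  have hv2 : v ∈ r2 := List.mem_of_getElem? h2c
  have hii : i1 = i2 := by
    rcases lt_trichotomy i1 i2 with h | h | h
    · obtain ⟨hl1, hg1⟩ := List.getElem?_eq_some_iff.mp h1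
      obtain ⟨hl2, hg2⟩ := List.getElem?_eq_some_iff.mp h2
      have := List.pairwise_iff_getElem.mp hdisj i1 i2 hl1 hl2 h
      rw [hg1, hg2] at this
      exact absurd (this hv1 hv2) (by simp)
    · exact h
    · obtain ⟨hl1, hg1⟩ := List.getElem?_eq_some_iff.mp h1
      obtain ⟨hl2, hg2⟩ := List.getElem?_eq_some_iff.mp h2
      have := List.pairwise_iff_getElem.mp hdisj i2 i1 hl2 hl1 h
      rw [hg1, hg2] at this
      exact absurd (this hv2 hv1) (by simp)
  subst hii
  rw [h1] at h2
  obtain rfl : r1 = r2 := Option.some.inj h2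
  refine ⟨rfl, ?_⟩
  have hnd1 : r1.Nodup := hrownd r1 (List.mem_of_getElem? h1)
  exact (List.getElem?_inj (List.getElem?_eq_some_iff.mp h1c).1 hnd1).mp (h1c.trans h2c.symm)



theorem charge_gt_of_first_row_not_initial (n d k : ℕ) (hn : n = d + k)
    (lam : List ℕ) (rows : List (List ℕ)) (hT : IsSYT rows lam n)
    (hrow : (rows.headD []).take k ≠ List.range' 1 k) :
    d < charge (readingWord rows) n := by
  obtain ⟨hlen, hchain0, hpos, hsum, hperm, hrows, hcol⟩ := hT
  have hchain : List.Chain' (fun a b => b ≤ a) (rows.map List.length) := hlen ▸ hchain0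
  -- k ≥ 1
  have hk1 : 1 ≤ k := by
    rcases Nat.eq_zero_or_pos k with rfl | h
    · simp at hrow
    · exact h
  have hkn : k ≤ n := by omega
  -- nodup
  have hnd : rows.flatten.Nodup := hperm.symm.nodup (List.nodup_range' (s := 1) (n := n))
  -- membership
  have hmemflat : ∀ v, 1 ≤ v → v ≤ n → v ∈ rows.flatten := by
    intro v h1 h2
    rw [hperm.mem_iff, List.mem_range'_1]
    omega
  have hflat_ge : ∀ v ∈ rows.flatten, 1 ≤ v := by
    intro v hv
    have := hperm.mem_iff.mp hv
    exact (List.mem_range'_1.mp this).1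
  -- rows nonempty
  have h1f : (1 : ℕ) ∈ rows.flatten := hmemflat 1 le_rfl (by omega)
  obtain ⟨r1', hr1'mem, h1r⟩ := List.mem_flatten.mp h1f
  have hrne : rows ≠ [] := fun h => by simp [h] at hr1'mem
  obtain ⟨hd, rs, rfl⟩ : ∃ hd rs, rows = hd :: rs := by
    cases rows with
    | nil => exact absurd rfl hrne
    | cons a l => exact ⟨a, l, rfl⟩
  simp only [List.headD_cons] at hrow
  -- entry 1 is at (0,0)
  have hhd0 : (hd :: rs)[0]? = some hd := rfl
  have h1pos : hd[0]? = some 1 := by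
    obtain ⟨i, hi⟩ := List.getElem?_of_mem hr1'mem
    obtain ⟨j, hj⟩ := List.getElem?_of_mem h1r
    -- j = 0
    have hj0 : j = 0 := by
      by_contra hj0
      have hjl : j - 1 < r1'.length := by
        have := (List.getElem?_eq_some_iff.mp hj).1; omega
      obtain ⟨v, hv⟩ : ∃ v, r1'[j-1]? = some v :=
        ⟨r1'[j-1], List.getElem?_eq_some_iff.mpr ⟨hjl, rfl⟩⟩
      have : v < 1 := aux_rowStrict (hrows r1' hr1'mem) (by omega) hv hj
      have : 1 ≤ v := hflat_ge v (List.mem_flatten.mpr ⟨r1', hr1'mem, List.mem_of_getElem? hv⟩)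
      omega
    subst hj0
    -- i = 0
    have hi0 : i = 0 := by
      by_contra hi0
      have hl0 : 0 < hd.length := by
        have h1 : 0 < r1'.length := (List.getElem?_eq_some_iff.mp hj).1
        have := aux_lenMono hchain (Nat.zero_le i) hhd0 hi
        omega
      obtain ⟨u, hu⟩ : ∃ u, hd[0]? = some u :=
        ⟨hd[0], List.getElem?_eq_some_iff.mpr ⟨hl0, rfl⟩⟩
      have : u < 1 := aux_colStrict hchain hcol (by omega) hhd0 hu hi hj
      have : 1 ≤ u := hflat_ge u (List.mem_flatten.mpr ⟨hd, List.mem_cons_self, List.mem_of_getElem? hu⟩)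
      omega
    subst hi0
    rw [hhd0] at hi
    rw [show hd = r1' from Option.some.inj hi]
    exact hj
  -- minimal mismatch position p
  have hex : ∃ q, q < k ∧ hd[q]? ≠ some (q + 1) := by
    by_contra hno
    push_neg at hno
    apply hrow
    have hlenk : k ≤ hd.length := by
      have := (List.getElem?_eq_some_iff.mp (hno (k-1) (by omega))).1
      omega
    apply List.ext_getElem?
    intro m
    by_cases hm : m < k
    · rw [List.getElem?_take_of_lt hm, hno m hm, List.getElem?_range' hm]
      simp only [Option.some.injEq]
      omega
    · have e1 : (hd.take k)[m]? = none := by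
        rw [List.getElem?_eq_none_iff, List.length_take]
        omega
      have e2 : (List.range' 1 k)[m]? = none := by
        rw [List.getElem?_eq_none_iff, List.length_range']
        omega
      rw [e1, e2]
  classical
  set p := Nat.find hex with hp_def
  have hp : p < k ∧ hd[p]? ≠ some (p + 1) := Nat.find_spec hex
  have hmin : ∀ q, q < p → hd[q]? = some (q + 1) := by
    intro q hq
    have := Nat.find_min hex hq
    push_neg at this
    exact this (by omega)
  have hp1 : 1 ≤ p := by
    rcases Nat.eq_zero_or_pos p with h0 | h
    · exact absurd (h0 ▸ h1pos) (h0 ▸ hp.2)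
    · exact h
  have hdp1 : hd[p - 1]? = some p := by
    have := hmin (p - 1) (by omega)
    rwa [show p - 1 + 1 = p by omega] at this
  -- locate entry p+1
  have htf : (p + 1) ∈ (hd :: rs).flatten := hmemflat (p+1) (by omega) (by omega)
  obtain ⟨r, hrmem, htr⟩ := List.mem_flatten.mp htf
  obtain ⟨i, hi⟩ := List.getElem?_of_mem hrmem
  obtain ⟨c, hc⟩ := List.getElem?_of_mem htr
  -- i ≥ 1
  have hi1 : 1 ≤ i := by
    by_contra hi0
    have hi0 : i = 0 := by omega
    subst hi0
    rw [hhd0] at hi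
    obtain rfl : hd = r := Option.some.inj hi
    rcases lt_trichotomy c p with h | rfl | h
    · have h2 := hmin c h
      rw [hc] at h2
      have := Option.some.inj h2
      omega
    · exact hp.2 hc
    · obtain ⟨u, hu⟩ : ∃ u, hd[p]? = some u := by
        have hl : p < hd.length := by
          have := (List.getElem?_eq_some_iff.mp hc).1; omega
        exact ⟨hd[p], List.getElem?_eq_some_iff.mpr ⟨hl, rfl⟩⟩
      have h1 : p < u := aux_rowStrict (hrows hd hrmem) (by omega) hdp1 hu
      have h2 : u < p + 1 := aux_rowStrict (hrows hd hrmem) h hu hc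
      omega
  -- c < p
  have hcp : c < p := by
    by_contra hcp
    push_neg at hcp
    have hhdlen : p < hd.length := by
      have h1 : c < r.length := (List.getElem?_eq_some_iff.mp hc).1
      have h2 : r.length ≤ hd.length := aux_lenMono hchain (Nat.zero_le i) hhd0 hi
      omega
    obtain ⟨u, hu⟩ : ∃ u, hd[p]? = some u :=
      ⟨hd[p], List.getElem?_eq_some_iff.mpr ⟨hhdlen, rfl⟩⟩
    obtain ⟨uc, huc⟩ : ∃ uc, hd[c]? = some uc := by
      have hl : c < hd.length := by
        have h1 : c < r.length := (List.getElem?_eq_some_iff.mp hc).1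
        have h2 : r.length ≤ hd.length := aux_lenMono hchain (Nat.zero_le i) hhd0 hi
        omega
      exact ⟨hd[c], List.getElem?_eq_some_iff.mpr ⟨hl, rfl⟩⟩
    have h1 : p < u := aux_rowStrict (hrows hd (List.mem_cons_self)) (by omega) hdp1 hu
    have h2 : uc < p + 1 := aux_colStrict hchain hcol (by omega) hhd0 huc hi hc
    have h3 : u ≤ uc := by
      rcases eq_or_lt_of_le hcp with rfl | hl
      · rw [hu] at huc
        exact le_of_eq (Option.some.inj huc)
      · exact le_of_lt (aux_rowStrict (hrows hd (List.mem_cons_self)) hl hu huc)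
    omega
  -- reading word decomposition
  have hpM : p ≤ ((hd :: rs).map List.length).foldr max 0 := by
    have h1 : p ≤ hd.length := by
      have := (List.getElem?_eq_some_iff.mp hdp1).1; omega
    have h2 : hd.length ≤ ((hd :: rs).map List.length).foldr max 0 := by
      rw [List.map_cons, List.foldr_cons]
      exact le_max_left _ _
    omega
  obtain ⟨L2, hsplit⟩ : ∃ L2, List.range (((hd :: rs).map List.length).foldr max 0) =
      List.range (p - 1) ++ (p - 1) :: L2 := by
    refine ⟨(List.map Nat.succ (List.range (((hd :: rs).map List.length).foldr max 0 - p))).map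
      (fun x => (p - 1) + x), ?_⟩
    conv_lhs => rw [show ((hd :: rs).map List.length).foldr max 0 =
      (p - 1) + (1 + (((hd :: rs).map List.length).foldr max 0 - p)) by omega]
    rw [List.range_add, show 1 + (((hd :: rs).map List.length).foldr max 0 - p) =
      (((hd :: rs).map List.length).foldr max 0 - p) + 1 by omega, List.range_succ_eq_map]
    simp
  have hT : (hd :: rs).filterMap (fun r => r[p - 1]?) =
      p :: rs.filterMap (fun r => r[p - 1]?) :=
    List.filterMap_cons_some hdp1
  have hw : readingWord (hd :: rs) =
      ((List.range (p - 1)).flatMap (fun j => (((hd :: rs)).filterMap (fun r => r[j]?)).reverse)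
        ++ (rs.filterMap (fun r => r[p - 1]?)).reverse)
      ++ p :: L2.flatMap (fun j => (((hd :: rs)).filterMap (fun r => r[j]?)).reverse) := by
    simp only [readingWord]
    rw [hsplit, List.flatMap_append, List.flatMap_cons]
    rw [hT, List.reverse_cons]
    simp [List.append_assoc]
  -- (p+1) is in the prefix A
  have hyA : (p + 1) ∈ (List.range (p - 1)).flatMap
        (fun j => (((hd :: rs)).filterMap (fun r => r[j]?)).reverse)
      ++ (rs.filterMap (fun r => r[p - 1]?)).reverse := by
    rcases eq_or_lt_of_le (show c ≤ p - 1 by omega) with heq | hlt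
    · apply List.mem_append_right
      rw [List.mem_reverse]
      obtain ⟨i', rfl⟩ : ∃ i', i = i' + 1 := ⟨i - 1, by omega⟩
      rw [List.getElem?_cons_succ] at hi
      exact List.mem_filterMap.mpr ⟨r, List.mem_of_getElem? hi, by rw [← heq]; exact hc⟩
    · apply List.mem_append_left
      apply List.mem_flatMap.mpr
      exact ⟨c, List.mem_range.mpr hlt, List.mem_reverse.mpr
        (List.mem_filterMap.mpr ⟨r, hrmem, hc⟩)⟩
  -- p is not in the prefix A
  have hxA : p ∉ (List.range (p - 1)).flatMap
        (fun j => (((hd :: rs)).filterMap (fun r => r[j]?)).reverse)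
      ++ (rs.filterMap (fun r => r[p - 1]?)).reverse := by
    intro hmem
    rcases List.mem_append.mp hmem with hmem | hmem
    · obtain ⟨c', hc'r, hc'm⟩ := List.mem_flatMap.mp hmem
      rw [List.mem_reverse] at hc'm
      obtain ⟨r', hr'm, hr'g⟩ := List.mem_filterMap.mp hc'm
      obtain ⟨i', hi'⟩ := List.getElem?_of_mem hr'm
      have huq := aux_cellUniq hnd hi' hr'g hhd0 hdp1
      have hc'lt := List.mem_range.mp hc'r
      omega
    · rw [List.mem_reverse] at hmem
      obtain ⟨r', hr'm, hr'g⟩ := List.mem_filterMap.mp hmem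
      obtain ⟨m, hm⟩ := List.getElem?_of_mem hr'm
      have hm' : (hd :: rs)[m + 1]? = some r' := by
        rw [List.getElem?_cons_succ]; exact hm
      have := aux_colStrict hchain hcol (Nat.succ_pos m) hhd0 hdp1 hm' hr'g
      omega
  have hlt := aux_idxOf_lt (B := L2.flatMap
    (fun j => (((hd :: rs)).filterMap (fun r => r[j]?)).reverse)) hyA hxA
  rw [← hw] at hlt
  have hne : ¬ (readingWord (hd :: rs)).idxOf ((p + 1) - 1) <
      (readingWord (hd :: rs)).idxOf (p + 1) := by
    simpa using Nat.lt_asymm hlt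
  have hch := aux_charge (show 2 ≤ p + 1 by omega) (show p + 1 ≤ n by omega) hne
  omega
end

section
/- The polynomial (X₁ − X₂)² is invariant under the transposition swapping X₁ and X₂, and is a sum of squares of polynomials, but it cannot be written as a sum of squares of symmetric polynomials in ℝ[X₁, X₂]. -/
open MvPolynomial

private theorem even_aux (g : MvPolynomial (Fin 2) ℝ) (h : rename (Equiv.swap (0 : Fin 2) 1) g = g) :
    (aeval ![(Polynomial.X : Polynomial ℝ), -Polynomial.X] g).comp (-Polynomial.X)
      = aeval ![(Polynomial.X : Polynomial ℝ), -Polynomial.X] g := by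
  have hf : (fun i => (Polynomial.aeval (-Polynomial.X : Polynomial ℝ) : Polynomial ℝ →ₐ[ℝ] Polynomial ℝ) (![(Polynomial.X : Polynomial ℝ), -Polynomial.X] i)) = ![(-Polynomial.X : Polynomial ℝ), Polynomial.X] := by
    funext j; fin_cases j <;> simp
  have h1 : (Polynomial.aeval (-Polynomial.X : Polynomial ℝ) : Polynomial ℝ →ₐ[ℝ] Polynomial ℝ) (aeval ![(Polynomial.X : Polynomial ℝ), -Polynomial.X] g) = aeval ![(-Polynomial.X : Polynomial ℝ), Polynomial.X] g :=
    (comp_aeval_apply _ _ _).trans (by rw [hf])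
  have hc : (![(Polynomial.X : Polynomial ℝ), -Polynomial.X] ∘ (Equiv.swap (0 : Fin 2) 1)) = ![(-Polynomial.X : Polynomial ℝ), Polynomial.X] := by
    funext j; fin_cases j <;> simp
  have h2 : aeval ![(-Polynomial.X : Polynomial ℝ), Polynomial.X] g = aeval ![(Polynomial.X : Polynomial ℝ), -Polynomial.X] g := by
    conv_rhs => rw [← h, aeval_rename, hc]
  rw [Polynomial.aeval_def, Polynomial.algebraMap_eq] at h1
  rw [Polynomial.comp, h1, h2]

private theorem coeff1_aux (p : Polynomial ℝ) (h : p.comp (-Polynomial.X) = p) :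
    p.coeff 1 = 0 := by
  have hd := congrArg Polynomial.derivative h
  rw [Polynomial.derivative_comp] at hd
  have he := congrArg (Polynomial.eval 0) hd
  simp [Polynomial.eval_comp] at he
  have : (Polynomial.derivative p).coeff 0 = 0 := by
    rw [Polynomial.coeff_zero_eq_eval_zero]; linarith
  rw [Polynomial.coeff_derivative] at this
  simpa using this

theorem square_of_difference_sos_but_not_symmetric_sos :
    (rename (Equiv.swap (0 : Fin 2) 1) ((X 0 - X 1) ^ 2 : MvPolynomial (Fin 2) ℝ)
        = ((X 0 - X 1) ^ 2 : MvPolynomial (Fin 2) ℝ)) ∧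
    (∃ (m : ℕ) (g : Fin m → MvPolynomial (Fin 2) ℝ),
        ((X 0 - X 1) ^ 2 : MvPolynomial (Fin 2) ℝ) = ∑ i, (g i) ^ 2) ∧
    ¬ (∃ (m : ℕ) (g : Fin m → MvPolynomial (Fin 2) ℝ),
        (∀ i, rename (Equiv.swap (0 : Fin 2) 1) (g i) = g i) ∧
        ((X 0 - X 1) ^ 2 : MvPolynomial (Fin 2) ℝ) = ∑ i, (g i) ^ 2) := by
  refine ⟨?_, ⟨1, ![X 0 - X 1], by simp⟩, ?_⟩
  · simp only [map_pow, map_sub, rename_X, Equiv.swap_apply_left, Equiv.swap_apply_right]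
    ring
  · rintro ⟨m, g, hsym, hsum⟩
    set q : Fin m → Polynomial ℝ :=
      fun i => aeval ![(Polynomial.X : Polynomial ℝ), -Polynomial.X] (g i) with hq
    have hsum' : ∑ i, (q i) ^ 2 = 4 * Polynomial.X ^ 2 := by
      have := congrArg (aeval ![(Polynomial.X : Polynomial ℝ), -Polynomial.X]) hsum
      simp only [map_sum, map_pow, map_sub, aeval_X, Matrix.cons_val_zero, Matrix.cons_val_one,
        Matrix.head_cons] at this
      rw [hq, ← this]
      ring
    have h0 : ∀ i, (q i).coeff 0 = 0 := by
      have hc0 := congrArg (fun p => Polynomial.coeff p 0) hsum'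
      simp only [Polynomial.finset_sum_coeff, sq, Polynomial.mul_coeff_zero] at hc0
      norm_num at hc0
      intro i
      have := (Finset.sum_eq_zero_iff_of_nonneg (fun i _ => mul_self_nonneg ((q i).coeff 0))).mp
        hc0 i (Finset.mem_univ i)
      nlinarith [this]
    have h1 : ∀ i, (q i).coeff 1 = 0 := fun i => coeff1_aux _ (even_aux _ (hsym i))
    have hrhs : ((4 : Polynomial ℝ) * Polynomial.X ^ 2).coeff 2 = 4 := by
      simp
    have hterm : ∀ i, ((q i) ^ 2).coeff 2 = 0 := by
      intro i
      rw [sq, Polynomial.coeff_mul, show (2:ℕ) = 1 + 1 from rfl,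
        Finset.Nat.sum_antidiagonal_eq_sum_range_succ_mk]
      simp [Finset.sum_range_succ, h0, h1]
    have hc2 : (0:ℝ) = 4 := by
      rw [← hrhs, ← hsum', Polynomial.finset_sum_coeff]
      rw [Finset.sum_eq_zero fun i _ => hterm i]
    norm_num at hc2
end

section
/- Let f = a·(X₁²+X₂²+X₃²+X₄²)² + b·(X₁⁴+X₂⁴+X₃⁴+X₄⁴) + c·X₁X₂X₃X₄ with a, b, c ∈ ℝ. Then f is nonnegative on ℝ⁴ if and only if f(1,0,0,0) ≥ 0, f(1,1,1,1) ≥ 0, and f(1,1,1,−1) ≥ 0. -/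
/-- The `D₄`-invariant quartic `a·(Σxᵢ²)² + b·Σxᵢ⁴ + c·x₁x₂x₃x₄` as a function on `ℝ⁴`. -/
def D4Quartic (a b c : ℝ) (x : Fin 4 → ℝ) : ℝ :=
  a * (∑ i, x i ^ 2) ^ 2 + b * (∑ i, x i ^ 4) + c * (∏ i, x i)

theorem D4_quartic_nonneg_iff_three_points (a b c : ℝ) :
    (∀ x : Fin 4 → ℝ, 0 ≤ D4Quartic a b c x) ↔
      (0 ≤ D4Quartic a b c ![1, 0, 0, 0] ∧
       0 ≤ D4Quartic a b c ![1, 1, 1, 1] ∧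
       0 ≤ D4Quartic a b c ![1, 1, 1, -1]) := by
  constructor
  · intro h
    exact ⟨h _, h _, h _⟩
  · rintro ⟨h1, h2, h3⟩ x
    simp only [D4Quartic, Fin.sum_univ_four, Fin.prod_univ_four,
      Matrix.cons_val_zero, Matrix.cons_val_one, Matrix.head_cons,
      Matrix.cons_val_two, Matrix.tail_cons, Matrix.cons_val_three] at h1 h2 h3 ⊢
    norm_num at h1 h2 h3
    set x0 := x 0; set x1 := x 1; set x2 := x 2; set x3 := x 3
    have hA : a + b ≥ 0 := by linarith
    have hB : 16*a + 4*b + c ≥ 0 := by linarith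
    have hC : 16*a + 4*b - c ≥ 0 := by linarith
    have hq : 0 ≤ 4*(x0^4+x1^4+x2^4+x3^4) - (x0^2+x1^2+x2^2+x3^2)^2 := by
      nlinarith [sq_nonneg (x0^2-x1^2), sq_nonneg (x0^2-x2^2), sq_nonneg (x0^2-x3^2),
        sq_nonneg (x1^2-x2^2), sq_nonneg (x1^2-x3^2), sq_nonneg (x2^2-x3^2)]
    have hp : 0 ≤ (x0^2+x1^2+x2^2+x3^2)^2 - (x0^4+x1^4+x2^4+x3^4) + 12*(x0*x1*x2*x3) := by
      nlinarith [sq_nonneg (x0*x1 + x2*x3), sq_nonneg (x0*x2 + x1*x3), sq_nonneg (x0*x3 + x1*x2)]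
    have hm : 0 ≤ (x0^2+x1^2+x2^2+x3^2)^2 - (x0^4+x1^4+x2^4+x3^4) - 12*(x0*x1*x2*x3) := by
      nlinarith [sq_nonneg (x0*x1 - x2*x3), sq_nonneg (x0*x2 - x1*x3), sq_nonneg (x0*x3 - x1*x2)]
    nlinarith [mul_nonneg hq hA, mul_nonneg hp hB, mul_nonneg hm hC]
end

section
/- Every D₄-invariant quartic form f = a·p₂² + b·p₄ + c·e₄ that is nonnegative on ℝ⁴ can be written as a nonnegative linear combination of the three forms 4·p₄ − p₂², p₂² − p₄ + 12·e₄, and p₂² − p₄ − 12·e₄; that is, the cone of nonnegative D₄-invariant quartics is the simplicial cone generated by these three forms. -/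
open MvPolynomial

noncomputable def p2sq : MvPolynomial (Fin 4) ℝ := (∑ i, X i ^ 2) ^ 2
noncomputable def p4 : MvPolynomial (Fin 4) ℝ := ∑ i, X i ^ 4
noncomputable def e4 : MvPolynomial (Fin 4) ℝ := ∏ i, X i

theorem nonneg_D4_quartic_in_simplicial_cone (a b c : ℝ)
    (hf : ∀ x : Fin 4 → ℝ, 0 ≤ eval x (C a * p2sq + C b * p4 + C c * e4)) :
    ∃ t₁ t₂ t₃ : ℝ, 0 ≤ t₁ ∧ 0 ≤ t₂ ∧ 0 ≤ t₃ ∧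
      C a * p2sq + C b * p4 + C c * e4 =
        C t₁ * (4 * p4 - p2sq) + C t₂ * (p2sq - p4 + 12 * e4)
          + C t₃ * (p2sq - p4 - 12 * e4) := by
  have h1 := hf ![1,0,0,0]
  have h2 := hf ![1,1,1,1]
  have h3 := hf ![1,1,1,-1]
  simp [p2sq, p4, e4, Fin.sum_univ_four, Fin.prod_univ_four] at h1 h2 h3
  refine ⟨(a+b)/3, (16*a+4*b+c)/24, (16*a+4*b-c)/24, by linarith, by linarith, by linarith, ?_⟩
  apply MvPolynomial.funext
  intro x
  simp [p2sq, p4, e4, Fin.sum_univ_four, Fin.prod_univ_four]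
  ring
end

section
/- The even symmetric ternary octic form 3·e₁(X²)·e₃(X²) − 4·e₂(X²)² + e₁(X²)²·e₂(X²) is nonnegative on ℝ³, where X² = (X₁², X₂², X₃²) and eᵢ are elementary symmetric polynomials in three variables. -/
theorem even_symmetric_octic_3e1e3_minus_4e2sq_plus_e1sq_e2_nonneg :
    ∀ x y z : ℝ,
      0 ≤ 3 * (x ^ 2 + y ^ 2 + z ^ 2) * (x ^ 2 * y ^ 2 * z ^ 2)
            - 4 * (x ^ 2 * y ^ 2 + x ^ 2 * z ^ 2 + y ^ 2 * z ^ 2) ^ 2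
            + (x ^ 2 + y ^ 2 + z ^ 2) ^ 2
              * (x ^ 2 * y ^ 2 + x ^ 2 * z ^ 2 + y ^ 2 * z ^ 2) := by
  intro x y z
  have h : 3 * (x ^ 2 + y ^ 2 + z ^ 2) * (x ^ 2 * y ^ 2 * z ^ 2)
            - 4 * (x ^ 2 * y ^ 2 + x ^ 2 * z ^ 2 + y ^ 2 * z ^ 2) ^ 2
            + (x ^ 2 + y ^ 2 + z ^ 2) ^ 2
              * (x ^ 2 * y ^ 2 + x ^ 2 * z ^ 2 + y ^ 2 * z ^ 2)
      = (x * y * (x ^ 2 - y ^ 2)) ^ 2 + (y * z * (y ^ 2 - z ^ 2)) ^ 2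
        + (x * z * (x ^ 2 - z ^ 2)) ^ 2 := by ring
  rw [h]
  positivity
end
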